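/- The companion matrix A of the polynomial x^n - x^{n-1} - ... - x - 1 (i.e., the (0,1) companion matrix whose last row is all ones) satisfies exp(A) = n, and it is the unique primitive (0,1) companion matrix of order n with exponent n. -/

import Mathlib

open Matrix BigOperators

/-- A nonnegative square matrix is primitive if some positive power has all entries positive. -/
def IsPrimitive {n : ℕ} (A : Matrix (Fin n) (Fin n) ℝ) : Prop :=
  ∃ m : ℕ, 0 < m ∧ ∀ i j, 0 < (A ^ m) i j

/-- The exponent of a primitive matrix: the least positive `m` with `A ^ m > 0`. -/
noncomputable def matExp {n : ℕ} (A : Matrix (Fin n) (Fin n) ℝ) : ℕ :=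
  sInf {m : ℕ | 0 < m ∧ ∀ i j, 0 < (A ^ m) i j}

/-- `(0,1)` companion matrix: superdiagonal ones on the first `n-1` rows,
arbitrary `(0,1)` last row, all other entries zero. -/
def IsCompanion {n : ℕ} (A : Matrix (Fin n) (Fin n) ℝ) : Prop :=
  (∀ i j, A i j = 0 ∨ A i j = 1) ∧
  (∀ i j : Fin n, (i : ℕ) + 1 < n → (A i j = 1 ↔ (j : ℕ) = (i : ℕ) + 1))

/-- `exp(A:i,j)`: least positive `k` such that `(A^l) i j > 0` for all `l ≥ k`. -/
noncomputable def expIJ {n : ℕ} (A : Matrix (Fin n) (Fin n) ℝ) (i j : Fin n) : ℕ :=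
  sInf {k : ℕ | 0 < k ∧ ∀ l, k ≤ l → 0 < (A ^ l) i j}

/-- `exp(A:i)`: least positive `p` such that every entry of row `i` of `A ^ p` is positive. -/
noncomputable def expRow {n : ℕ} (A : Matrix (Fin n) (Fin n) ℝ) (i : Fin n) : ℕ :=
  sInf {p : ℕ | 0 < p ∧ ∀ j, 0 < (A ^ p) i j}

/-- The digraph of `A` has an elementary cycle of length `k`. -/
def HasElemCycle {n : ℕ} (A : Matrix (Fin n) (Fin n) ℝ) (k : ℕ) : Prop :=
  0 < k ∧ ∃ c : ℕ → Fin n, c k = c 0 ∧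
    (∀ i j, i < k → j < k → c i = c j → i = j) ∧
    ∀ i < k, A (c i) (c (i + 1)) = 1

/-- `m(U)`: the maximal length of a run of consecutive integers contained in `U`. -/
noncomputable def runMax (U : Set ℕ) : ℕ :=
  sSup {k : ℕ | ∃ a : ℕ, ∀ t < k, a + t ∈ U}

/-- The Frobenius number of a set `L`: the least `N` such that every `m ≥ N` is a
nonnegative integer combination of elements of `L`. -/
noncomputable def frobNum (L : Set ℕ) : ℕ :=
  sInf {N : ℕ | ∀ m, N ≤ m → m ∈ AddSubmonoid.closure L}

/-- Irreducibility: for all `i j` there is a walk of some positive length from `i` to `j`. -/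
def IsIrreducibleMat {n : ℕ} (A : Matrix (Fin n) (Fin n) ℝ) : Prop :=
  ∀ i j, ∃ k : ℕ, 0 < k ∧ 0 < (A ^ k) i j

lemma comp_entry_nonneg {n : ℕ} {B : Matrix (Fin n) (Fin n) ℝ} (hB : IsCompanion B)
    (i j : Fin n) : 0 ≤ B i j := by rcases hB.1 i j with h | h <;> simp [h]

lemma pow_entry_nonneg {n : ℕ} {B : Matrix (Fin n) (Fin n) ℝ} (hB : IsCompanion B) :
    ∀ k (i j : Fin n), 0 ≤ (B ^ k) i j := by
  intro k
  induction k with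
  | zero => intro i j; by_cases h : i = j <;> simp [Matrix.one_apply, h]
  | succ k ih =>
    intro i j
    rw [pow_succ, Matrix.mul_apply]
    exact Finset.sum_nonneg fun l _ => mul_nonneg (ih i l) (comp_entry_nonneg hB l j)

lemma comp_row {n : ℕ} {B : Matrix (Fin n) (Fin n) ℝ} (hB : IsCompanion B) (i : Fin n)
    (h : (i : ℕ) + 1 < n) (l : Fin n) :
    B i l = if l = (⟨(i : ℕ) + 1, h⟩ : Fin n) then 1 else 0 := by
  by_cases hl : l = (⟨(i : ℕ) + 1, h⟩ : Fin n)
  · rw [if_pos hl, (hB.2 i l h).mpr (by rw [hl])]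
  · rw [if_neg hl]
    rcases hB.1 i l with h0 | h1
    · exact h0
    · exact absurd (Fin.ext ((hB.2 i l h).mp h1)) hl

lemma pow_formula {n : ℕ} {B : Matrix (Fin n) (Fin n) ℝ} (hB : IsCompanion B) :
    ∀ m (i j : Fin n), (i : ℕ) + m ≤ n - 1 →
      (B ^ m) i j = if (j : ℕ) = (i : ℕ) + m then 1 else 0 := by
  intro m
  induction m with
  | zero =>
    intro i j _
    simp [Matrix.one_apply, Fin.ext_iff, eq_comm]
  | succ m ih =>
    intro i j hm
    have hn : 0 < n := i.pos
    have h1 : (i : ℕ) + 1 < n := by omega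
    have step : (B ^ (m + 1)) i j = (B ^ m) (⟨(i : ℕ) + 1, h1⟩ : Fin n) j := by
      rw [pow_succ', Matrix.mul_apply,
        Finset.sum_congr rfl (fun l _ => by rw [comp_row hB i h1 l])]
      simp
    rw [step, ih ⟨(i : ℕ) + 1, h1⟩ j (by simp; omega)]
    have : (i : ℕ) + 1 + m = (i : ℕ) + (m + 1) := by omega
    rw [this]

lemma sum_indicator {n : ℕ} (c : Fin n) (f : Fin n → ℝ) :
    (∑ l : Fin n, (if (l : ℕ) = (c : ℕ) then (1:ℝ) else 0) * f l) = f c := by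
  have h : ∀ l : Fin n, (if (l : ℕ) = (c : ℕ) then (1:ℝ) else 0) * f l
      = if l = c then f l else 0 := by
    intro l; by_cases hl : l = c
    · simp [hl]
    · rw [if_neg (fun h => hl (Fin.ext h)), if_neg hl, zero_mul]
  rw [Finset.sum_congr rfl fun l _ => h l, Finset.sum_ite_eq' Finset.univ c f,
    if_pos (Finset.mem_univ c)]

theorem stmt7 {n : ℕ} (hn : 0 < n) (A : Matrix (Fin n) (Fin n) ℝ)
    (hA : IsCompanion A) (hrow : ∀ j : Fin n, A ⟨n - 1, by omega⟩ j = 1) :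
    _root_.IsPrimitive A ∧ matExp A = n ∧
      ∀ B : Matrix (Fin n) (Fin n) ℝ, IsCompanion B → _root_.IsPrimitive B → matExp B = n → B = A := by
  have hlast : n - 1 < n := by omega
  set lastI : Fin n := ⟨n - 1, hlast⟩ with hlastI
  have hrow' : ∀ j, A lastI j = 1 := hrow
  -- positivity from the last row
  have hApos : ∀ t, 0 < t → ∀ j, 0 < (A ^ t) lastI j := by
    intro t
    induction t with
    | zero => intro h; omega
    | succ t ih =>
      intro _ j
      rcases Nat.eq_zero_or_pos t with h0 | htp
      · subst h0
        rw [pow_one]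
        rw [hrow' j]; norm_num
      · rw [pow_succ', Matrix.mul_apply]
        refine Finset.sum_pos' (fun l _ => mul_nonneg (comp_entry_nonneg hA lastI l)
          (pow_entry_nonneg hA t l j)) ⟨lastI, Finset.mem_univ _, ?_⟩
        rw [hrow' lastI, one_mul]
        exact ih htp j
  -- A^n is entrywise positive
  have key : ∀ i j : Fin n, 0 < (A ^ n) i j := by
    intro i j
    have hi : (i : ℕ) ≤ n - 1 := by have := i.isLt; omega
    set d := n - 1 - (i : ℕ) with hd
    have hid : (i : ℕ) + d = n - 1 := by omega
    have h1 : (A ^ d) i lastI = 1 := by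
      rw [pow_formula hA d i lastI (by omega)]
      simp only [hlastI]
      rw [if_pos hid.symm]
    have h2 : 0 < (A ^ (n - d)) lastI j := hApos _ (by omega) j
    have hnd : d + (n - d) = n := by omega
    have hsum : (A ^ n) i j = ∑ l : Fin n, (A ^ d) i l * (A ^ (n - d)) l j := by
      rw [← Matrix.mul_apply, ← pow_add, hnd]
    rw [hsum]
    have hle : (A ^ d) i lastI * (A ^ (n - d)) lastI j
        ≤ ∑ l : Fin n, (A ^ d) i l * (A ^ (n - d)) l j :=
      Finset.single_le_sum (f := fun l => (A ^ d) i l * (A ^ (n - d)) l j)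
        (fun l _ => mul_nonneg (pow_entry_nonneg hA d i l) (pow_entry_nonneg hA (n - d) l j))
        (Finset.mem_univ lastI)
    calc (0:ℝ) < (A ^ d) i lastI * (A ^ (n - d)) lastI j := by rw [h1, one_mul]; exact h2
      _ ≤ _ := hle
  have hmem : n ∈ {m : ℕ | 0 < m ∧ ∀ i j, 0 < (A ^ m) i j} := ⟨hn, key⟩
  have hprim : _root_.IsPrimitive A := ⟨n, hn, key⟩
  have hge : ∀ m ∈ {m : ℕ | 0 < m ∧ ∀ i j, 0 < (A ^ m) i j}, n ≤ m := by
    intro m hm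
    by_contra h
    push_neg at h
    have hmpos : 0 < m := hm.1
    have h00 : (A ^ m) ⟨0, hn⟩ ⟨0, hn⟩ = 0 := by
      rw [pow_formula hA m ⟨0, hn⟩ ⟨0, hn⟩ (by simp only [Fin.val_mk]; omega)]
      rw [if_neg (by simp only [Fin.val_mk]; omega)]
    have := hm.2 ⟨0, hn⟩ ⟨0, hn⟩
    rw [h00] at this
    exact lt_irrefl 0 this
  have hexp : matExp A = n :=
    le_antisymm (Nat.sInf_le hmem) (hge _ (Nat.sInf_mem ⟨n, hmem⟩))
  refine ⟨hprim, hexp, ?_⟩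
  intro B hB hBprim hBexp
  have hmemB : n ∈ {m : ℕ | 0 < m ∧ ∀ i j, 0 < (B ^ m) i j} := by
    have := Nat.sInf_mem (s := {m : ℕ | 0 < m ∧ ∀ i j, 0 < (B ^ m) i j}) hBprim
    rwa [show sInf {m : ℕ | 0 < m ∧ ∀ i j, 0 < (B ^ m) i j} = n from hBexp] at this
  have hBlast : ∀ j, B lastI j = 1 := by
    intro j
    have hpos : 0 < (B ^ n) ⟨0, hn⟩ j := hmemB.2 ⟨0, hn⟩ j
    have heq : (B ^ n) ⟨0, hn⟩ j = B lastI j := by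
      have hpow : B ^ n = B ^ (n - 1) * B := by
        rw [← pow_succ, Nat.sub_add_cancel hn]
      rw [hpow, Matrix.mul_apply,
        Finset.sum_congr rfl (fun l _ => by
          rw [pow_formula hB (n - 1) ⟨0, hn⟩ l (by simp)])]
      simp only [Fin.val_mk, Nat.zero_add]
      exact sum_indicator lastI (fun l => B l j)
    rw [heq] at hpos
    rcases hB.1 lastI j with h0 | h1
    · rw [h0] at hpos; exact absurd hpos (lt_irrefl 0)
    · exact h1
  ext i j
  by_cases hi : (i : ℕ) + 1 < n
  · rw [comp_row hB i hi j, comp_row hA i hi j]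
  · have : i = lastI := Fin.ext (by have := i.isLt; simp only [hlastI]; omega)
    rw [this, hBlast j, hrow' j]
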